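/- arXiv:2603.09947 — 7 statements merged into one kernel-verified Lean document; each statement's English description precedes it below -/
import Mathlib

section
/- Let (Ω, P) be a probability space, acc : Ω → {0,1}, and c : Ω → [0,1]. Then selective accuracy SA(t) = E[acc | c ≥ t] is monotonically non-decreasing in t (over thresholds with positive coverage) if and only if condition C2 holds: for all a < b with P(a ≤ c < b) > 0 and P(c ≥ b) > 0, E[acc | a ≤ c < b] ≤ E[acc | c ≥ b]. -/
open MeasureTheory

/-- Selective accuracy: conditional expectation of `acc` given confidence at least `t`. -/
noncomputable def SA {Ω : Type*} [MeasurableSpace Ω] (P : Measure Ω) (acc c : Ω → ℝ) (t : ℝ) : ℝ :=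
  ⨍ ω in {ω | t ≤ c ω}, acc ω ∂P

section Aux

variable {Ω : Type*} [MeasurableSpace Ω] (P : Measure Ω) [IsProbabilityMeasure P]
  (acc c : Ω → ℝ)

private lemma acc_int (hma : Measurable acc) (hacc : ∀ ω, acc ω = 0 ∨ acc ω = 1) :
    Integrable acc P :=
  (integrable_const (1 : ℝ)).mono' hma.aestronglyMeasurable
    (Filter.Eventually.of_forall fun ω => by rcases hacc ω with h | h <;> simp [h])

private lemma union_decomp {a b : ℝ} (hab : a ≤ b) :
    {ω | a ≤ c ω} = {ω | a ≤ c ω ∧ c ω < b} ∪ {ω | b ≤ c ω} := by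
  ext ω
  simp only [Set.mem_setOf_eq, Set.mem_union]
  constructor
  · intro h
    by_cases hb : b ≤ c ω
    · exact Or.inr hb
    · exact Or.inl ⟨h, lt_of_not_ge hb⟩
  · rintro (⟨h, _⟩ | h) <;> linarith

private lemma disj_decomp (a b : ℝ) :
    Disjoint {ω | a ≤ c ω ∧ c ω < b} {ω | b ≤ c ω} := by
  rw [Set.disjoint_left]
  rintro ω ⟨_, h1⟩ h2
  exact absurd h2 (not_le.mpr h1)

private lemma measure_decomp (hmc : Measurable c) {a b : ℝ} (hab : a ≤ b) :
    P {ω | a ≤ c ω} = P {ω | a ≤ c ω ∧ c ω < b} + P {ω | b ≤ c ω} := by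
  rw [union_decomp c hab]
  exact measure_union (disj_decomp c a b) (measurableSet_le measurable_const hmc)

private lemma integral_decomp (hma : Measurable acc) (hmc : Measurable c) (hacc : ∀ ω, acc ω = 0 ∨ acc ω = 1)
    {a b : ℝ} (hab : a ≤ b) :
    ∫ ω in {ω | a ≤ c ω}, acc ω ∂P =
      (∫ ω in {ω | a ≤ c ω ∧ c ω < b}, acc ω ∂P) + ∫ ω in {ω | b ≤ c ω}, acc ω ∂P := by
  rw [union_decomp c hab]
  exact setIntegral_union (disj_decomp c a b) (measurableSet_le measurable_const hmc)
    (acc_int P acc hma hacc).integrableOn (acc_int P acc hma hacc).integrableOn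

private lemma SA_eq_of_mid_zero (hma : Measurable acc) (hmc : Measurable c) (hacc : ∀ ω, acc ω = 0 ∨ acc ω = 1)
    {a b : ℝ} (hab : a ≤ b) (hPM : P {ω | a ≤ c ω ∧ c ω < b} = 0) :
    SA P acc c a = SA P acc c b := by
  have h1 := measure_decomp P c hmc hab (a := a) (b := b)
  have h2 := integral_decomp P acc c hma hmc hacc hab (a := a) (b := b)
  have h3 : ∫ ω in {ω | a ≤ c ω ∧ c ω < b}, acc ω ∂P = 0 :=
    setIntegral_measure_zero _ hPM
  unfold SA
  rw [setAverage_eq, setAverage_eq, measureReal_def, measureReal_def, h1, h2, h3, hPM, zero_add, zero_add]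

private lemma SA_le_iff (hma : Measurable acc) (hmc : Measurable c) (hacc : ∀ ω, acc ω = 0 ∨ acc ω = 1)
    {a b : ℝ} (hab : a ≤ b)
    (hPM : 0 < P {ω | a ≤ c ω ∧ c ω < b}) (hPH : 0 < P {ω | b ≤ c ω}) :
    (SA P acc c a ≤ SA P acc c b ↔
      ⨍ ω in {ω | a ≤ c ω ∧ c ω < b}, acc ω ∂P ≤ ⨍ ω in {ω | b ≤ c ω}, acc ω ∂P) := by
  have h1 := measure_decomp P c hmc hab (a := a) (b := b)
  have h2 := integral_decomp P acc c hma hmc hacc hab (a := a) (b := b)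
  set IM := ∫ ω in {ω | a ≤ c ω ∧ c ω < b}, acc ω ∂P with hIM
  set IH := ∫ ω in {ω | b ≤ c ω}, acc ω ∂P with hIH
  have hm : 0 < (P {ω | a ≤ c ω ∧ c ω < b}).toReal :=
    ENNReal.toReal_pos hPM.ne' (measure_ne_top P _)
  have hh : 0 < (P {ω | b ≤ c ω}).toReal :=
    ENNReal.toReal_pos hPH.ne' (measure_ne_top P _)
  set m := (P {ω | a ≤ c ω ∧ c ω < b}).toReal with hmdef
  set h := (P {ω | b ≤ c ω}).toReal with hhdef
  have hmeasA : (P {ω | a ≤ c ω}).toReal = m + h := by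
    rw [h1, ENNReal.toReal_add (measure_ne_top P _) (measure_ne_top P _)]
  unfold SA
  rw [setAverage_eq, setAverage_eq, setAverage_eq, measureReal_def, measureReal_def, measureReal_def, ← hIM, ← hIH, h2, hmeasA, ← hmdef, ← hhdef]
  simp only [smul_eq_mul]
  rw [inv_mul_eq_div, inv_mul_eq_div, inv_mul_eq_div,
    div_le_div_iff₀ (by linarith) hh, div_le_div_iff₀ hm hh]
  constructor <;> intro hle <;> nlinarith

end Aux

/-- Confidence Gate Theorem: selective accuracy is monotone non-decreasing over
thresholds with positive coverage if and only if C2 (no inversion zones) holds. -/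
theorem confidence_gate_theorem
    {Ω : Type*} [MeasurableSpace Ω] (P : Measure Ω) [IsProbabilityMeasure P]
    (acc c : Ω → ℝ) (hma : Measurable acc) (hmc : Measurable c)
    (hacc : ∀ ω, acc ω = 0 ∨ acc ω = 1) (hc : ∀ ω, c ω ∈ Set.Icc (0 : ℝ) 1) :
    (∀ t₁ t₂ : ℝ, t₁ ≤ t₂ →
        0 < P {ω | t₁ ≤ c ω} → 0 < P {ω | t₂ ≤ c ω} →
        SA P acc c t₁ ≤ SA P acc c t₂)
      ↔ (∀ a b : ℝ, a < b →
          0 < P {ω | a ≤ c ω ∧ c ω < b} → 0 < P {ω | b ≤ c ω} →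
          ⨍ ω in {ω | a ≤ c ω ∧ c ω < b}, acc ω ∂P ≤ ⨍ ω in {ω | b ≤ c ω}, acc ω ∂P) := by
  constructor
  · intro hmono a b hab hPM hPH
    have hPA : 0 < P {ω | a ≤ c ω} := by
      rw [measure_decomp P c hmc hab.le (a := a) (b := b)]
      exact lt_of_lt_of_le hPM le_self_add
    have hle := hmono a b hab.le hPA hPH
    exact (SA_le_iff P acc c hma hmc hacc hab.le hPM hPH).mp hle
  · intro hC2 t₁ t₂ h12 hP1 hP2
    by_cases hPM : P {ω | t₁ ≤ c ω ∧ c ω < t₂} = 0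
    · exact le_of_eq (SA_eq_of_mid_zero P acc c hma hmc hacc h12 hPM)
    · have hPMpos : 0 < P {ω | t₁ ≤ c ω ∧ c ω < t₂} := pos_iff_ne_zero.mpr hPM
      have hlt : t₁ < t₂ := by
        rcases h12.lt_or_eq with h | h
        · exact h
        · exfalso
          apply hPM
          subst h
          convert measure_empty (μ := P)
          ext ω
          simp only [Set.mem_setOf_eq, Set.mem_empty_iff_false, iff_false, not_and, not_lt]
          intro hle
          exact hle
      have havg := hC2 t₁ t₂ hlt hPMpos hP2
      exact (SA_le_iff P acc c hma hmc hacc h12 hPMpos hP2).mpr havg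
end

section
/- There exists a finite probability space Ω, functions acc : Ω → {0,1} and c : Ω → [0,1], such that condition C2 holds (for all a < b with both relevant events having positive probability, E[acc | a ≤ c < b] ≤ E[acc | c ≥ b]) but condition C1 fails: there exist ω₁, ω₂ with c(ω₁) > c(ω₂) and acc(ω₁) < acc(ω₂). -/
open scoped Classical BigOperators

/-- Probability of the event `S` on a finite space with mass function `p`. -/
noncomputable def pr {Ω : Type*} [Fintype Ω] (p : Ω → ℝ) (S : Ω → Prop) : ℝ :=
  ∑ ω, if S ω then p ω else 0

/-- Conditional expectation of `acc` given the event `S` on a finite space. -/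
noncomputable def cexp {Ω : Type*} [Fintype Ω] (p acc : Ω → ℝ) (S : Ω → Prop) : ℝ :=
  (∑ ω, if S ω then p ω * acc ω else 0) / pr p S

/-- Converse failure of "C1 implies C2": there is a finite probability space where the
aggregate no-inversion condition C2 holds but pointwise rank-alignment C1 fails. -/
theorem c2_does_not_imply_c1 :
    ∃ (n : ℕ) (p acc c : Fin n → ℝ),
      (∀ ω, 0 < p ω) ∧ (∑ ω, p ω = 1) ∧
      (∀ ω, acc ω = 0 ∨ acc ω = 1) ∧ (∀ ω, c ω ∈ Set.Icc (0 : ℝ) 1) ∧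
      (∀ a b : ℝ, a < b →
        0 < pr p (fun ω => a ≤ c ω ∧ c ω < b) →
        0 < pr p (fun ω => b ≤ c ω) →
        cexp p acc (fun ω => a ≤ c ω ∧ c ω < b) ≤ cexp p acc (fun ω => b ≤ c ω)) ∧
      (∃ ω₁ ω₂, c ω₂ < c ω₁ ∧ acc ω₁ < acc ω₂) := by
  refine ⟨4, fun _ => 1/4, ![0,1,0,1], ![0,0,1,1], ?_, ?_, ?_, ?_, ?_, ?_⟩
  · intro ω; norm_num
  · simp [Fin.sum_univ_four]
  · intro ω; fin_cases ω <;> simp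
  · intro ω; fin_cases ω <;> norm_num
  · intro a b hab hband hupper
    rcases le_or_gt b 0 with hb0 | hb0
    · -- band empty
      exfalso
      have h1 : ¬ (1:ℝ) < b := by linarith
      have h0 : ¬ (0:ℝ) < b := by linarith
      simp [pr, Fin.sum_univ_four, h0, h1] at hband
    rcases le_or_gt b 1 with hb1 | hb1
    · -- upper = {c=1}, band must be {c=0}
      have h1 : ¬ (1:ℝ) < b := by linarith
      by_cases ha : a ≤ 0
      · have hb0' : ¬ b ≤ (0:ℝ) := not_le.mpr hb0
        simp [pr, cexp, Fin.sum_univ_four, ha, hb0, hb0', h1, hb1]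
      · exfalso
        have ha1 : ¬ a ≤ (0:ℝ) := ha
        have : ¬ (a ≤ (1:ℝ) ∧ (1:ℝ) < b) := by tauto
        simp [pr, Fin.sum_univ_four, ha1, this, hb0, h1] at hband
    · -- upper empty
      exfalso
      have : ¬ b ≤ (1:ℝ) := by linarith
      have h0 : ¬ b ≤ (0:ℝ) := by linarith
      simp [pr, Fin.sum_univ_four, this, h0] at hupper
  · exact ⟨2, 1, by simp, by simp⟩
end

section
/- Let Ω be a finite probability space, acc : Ω → {0,1}, c : Ω → [0,1]. Suppose the confidence values take finitely many distinct values v₁ < v₂ < ... < v_k, each with positive probability, and let a_i = E[acc | c = v_i] denote the level-set accuracies. Then C2 holds if and only if for every i, a_i ≤ (Σ_{j>i} P(c = v_j) a_j) / (Σ_{j>i} P(c = v_j)) whenever i < k; and if the sequence (a_i) is non-decreasing in i, then C2 holds. -/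
open scoped Classical BigOperators

lemma avg_le_right {x t w1 w2 : ℝ} (hw1 : 0 < w1) (hw2 : 0 < w2) (hx : x ≤ t) :
    (w1 * x + w2 * t) / (w1 + w2) ≤ t := by
  rw [div_le_iff₀ (by linarith)]
  nlinarith

lemma sum_div_le {k : ℕ} (w a : Fin k → ℝ) (hw : ∀ j, 0 < w j)
    (F : Finset (Fin k)) (hF : F.Nonempty) {t : ℝ} (ht : ∀ j ∈ F, a j ≤ t) :
    (∑ j ∈ F, w j * a j) / (∑ j ∈ F, w j) ≤ t := by
  have hS : 0 < ∑ j ∈ F, w j := Finset.sum_pos (fun j _ => hw j) hF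
  rw [div_le_iff₀ hS]
  calc ∑ j ∈ F, w j * a j ≤ ∑ j ∈ F, w j * t :=
        Finset.sum_le_sum (fun j hj => mul_le_mul_of_nonneg_left (ht j hj) (hw j).le)
    _ = t * ∑ j ∈ F, w j := by
        rw [Finset.mul_sum]; exact Finset.sum_congr rfl (fun j _ => mul_comm _ _)

noncomputable def tailT {k : ℕ} (w a : Fin k → ℝ) (i : Fin k) : ℝ :=
  (∑ j ∈ Finset.univ.filter (fun j => i < j), w j * a j)
    / (∑ j ∈ Finset.univ.filter (fun j => i < j), w j)

lemma tail_nonempty {k : ℕ} (i : Fin k) (h : (i : ℕ) + 1 < k) :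
    (Finset.univ.filter (fun l => i < l)).Nonempty :=
  ⟨⟨(i : ℕ) + 1, h⟩, by
    simp only [Finset.mem_filter, Finset.mem_univ, true_and, Fin.lt_def]; omega⟩

lemma tail_insert {k : ℕ} (i : Fin k) (h : (i : ℕ) + 1 < k) :
    Finset.univ.filter (fun l => i < l)
      = insert (⟨(i : ℕ) + 1, h⟩ : Fin k)
          (Finset.univ.filter (fun l => (⟨(i : ℕ) + 1, h⟩ : Fin k) < l)) := by
  ext l
  simp only [Finset.mem_filter, Finset.mem_univ, true_and, Finset.mem_insert, Fin.lt_def,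
    Fin.ext_iff]
  omega

lemma tailT_step {k : ℕ} (w a : Fin k → ℝ) (hw : ∀ j, 0 < w j)
    (i₀ i : Fin k) (hii : (i : ℕ) = (i₀ : ℕ) + 1) (hik : (i : ℕ) + 1 < k)
    (hai : a i ≤ tailT w a i) : tailT w a i₀ ≤ tailT w a i := by
  have h0 : (i₀ : ℕ) + 1 < k := by omega
  have hieq : i = (⟨(i₀ : ℕ) + 1, h0⟩ : Fin k) := Fin.ext hii
  have hS : 0 < ∑ l ∈ Finset.univ.filter (fun l => i < l), w l :=
    Finset.sum_pos (fun l _ => hw l) (tail_nonempty i hik)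
  have hnotmem : i ∉ Finset.univ.filter (fun l => i < l) := by simp
  have hNm : (∑ l ∈ Finset.univ.filter (fun l => i < l), w l * a l)
      = (∑ l ∈ Finset.univ.filter (fun l => i < l), w l) * tailT w a i := by
    rw [tailT, mul_div_cancel₀ _ hS.ne']
  have hsplit := tail_insert i₀ h0
  rw [← hieq] at hsplit
  have e1 : tailT w a i₀ = (w i * a i + (∑ l ∈ Finset.univ.filter (fun l => i < l), w l)
      * tailT w a i) / (w i + ∑ l ∈ Finset.univ.filter (fun l => i < l), w l) := by
    rw [tailT, hsplit, Finset.sum_insert hnotmem, Finset.sum_insert hnotmem, hNm]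
  rw [e1]
  exact avg_le_right (hw i) hS hai

lemma chain {k : ℕ} (w a : Fin k → ℝ) (hw : ∀ j, 0 < w j)
    (hcond : ∀ i : Fin k, (i : ℕ) + 1 < k → a i ≤ tailT w a i) :
    ∀ i : Fin k, (i : ℕ) + 1 < k → ∀ j : Fin k, j ≤ i → a j ≤ tailT w a i := by
  suffices H : ∀ n : ℕ, ∀ i : Fin k, (i : ℕ) ≤ n → (i : ℕ) + 1 < k →
      ∀ j : Fin k, j ≤ i → a j ≤ tailT w a i from
    fun i hik j hji => H (i : ℕ) i le_rfl hik j hji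
  intro n
  induction n with
  | zero =>
    intro i hi hik j hji
    have : j = i := Fin.ext (by have := Fin.le_def.mp hji; omega)
    rw [this]; exact hcond i hik
  | succ n IH =>
    intro i hi hik j hji
    rcases Nat.lt_or_ge (i : ℕ) (n + 1) with h1 | h2
    · exact IH i (by omega) hik j hji
    · have hiv : (i : ℕ) = n + 1 := le_antisymm hi h2
      rcases eq_or_lt_of_le hji with h | hjlt
      · rw [h]; exact hcond i hik
      · have hjn : (j : ℕ) ≤ n := by have := Fin.lt_def.mp hjlt; omega
        set i₀ : Fin k := ⟨n, by omega⟩ with hi₀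
        have h1 : a j ≤ tailT w a i₀ :=
          IH i₀ le_rfl (by simp [hi₀]; omega) j (Fin.le_def.mpr (by simp [hi₀]; omega))
        exact h1.trans (tailT_step w a hw i₀ i (by simp [hi₀]; omega) hik (hcond i hik))

lemma fiber_sum {Ω : Type*} [Fintype Ω] {k : ℕ} (c : Ω → ℝ) (v : Fin k → ℝ)
    (hv : Function.Injective v) (hrange : ∀ ω, ∃ i, c ω = v i)
    (g : Ω → ℝ) (Q : ℝ → Prop) :
    (∑ ω, if Q (c ω) then g ω else 0)
      = ∑ j ∈ Finset.univ.filter (fun j => Q (v j)),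
          (∑ ω, if c ω = v j then g ω else 0) := by
  rw [Finset.sum_filter]
  have step : ∀ j : Fin k,
      (∑ ω, if c ω = v j then (if Q (c ω) then g ω else 0) else 0)
        = (if Q (v j) then (∑ ω, if c ω = v j then g ω else 0) else 0) := by
    intro j
    split_ifs with h
    · refine Finset.sum_congr rfl fun ω _ => ?_
      by_cases h2 : c ω = v j
      · simp [h2, h]
      · simp [h2]
    · refine Finset.sum_eq_zero fun ω _ => ?_
      by_cases h2 : c ω = v j
      · simp [h2, h]
      · simp [h2]
  simp only [← step]
  rw [Finset.sum_comm]
  refine Finset.sum_congr rfl fun ω _ => ?_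
  obtain ⟨i, hi⟩ := hrange ω
  rw [Finset.sum_eq_single i]
  · rw [if_pos hi]
  · intro j _ hj
    exact if_neg (fun h => hj (hv (hi.symm.trans h)).symm)
  · intro h; exact absurd (Finset.mem_univ i) h

/-- Discrete characterization of the no-inversion-zones condition C2 in terms of
level-set accuracies: C2 holds iff every level's accuracy is at most the weighted
average accuracy of all strictly higher confidence levels; and monotone level
accuracies are sufficient for C2. -/
theorem c2_level_set_characterization {Ω : Type*} [Fintype Ω] {k : ℕ}
    (p acc c : Ω → ℝ) (v : Fin k → ℝ)
    (hp : ∀ ω, 0 < p ω) (hsum : ∑ ω, p ω = 1)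
    (hacc : ∀ ω, acc ω = 0 ∨ acc ω = 1) (hc : ∀ ω, c ω ∈ Set.Icc (0 : ℝ) 1)
    (hv : StrictMono v) (hrange : ∀ ω, ∃ i, c ω = v i)
    (hlevel : ∀ i, 0 < pr p (fun ω => c ω = v i)) :
    ((∀ a b : ℝ, a < b →
        0 < pr p (fun ω => a ≤ c ω ∧ c ω < b) →
        0 < pr p (fun ω => b ≤ c ω) →
        cexp p acc (fun ω => a ≤ c ω ∧ c ω < b) ≤ cexp p acc (fun ω => b ≤ c ω))
      ↔ (∀ i : Fin k, (i : ℕ) + 1 < k →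
          cexp p acc (fun ω => c ω = v i)
            ≤ (∑ j ∈ Finset.univ.filter (fun j => i < j),
                  pr p (fun ω => c ω = v j) * cexp p acc (fun ω => c ω = v j))
              / (∑ j ∈ Finset.univ.filter (fun j => i < j), pr p (fun ω => c ω = v j))))
    ∧ ((∀ i j : Fin k, i ≤ j →
          cexp p acc (fun ω => c ω = v i) ≤ cexp p acc (fun ω => c ω = v j)) →
        (∀ a b : ℝ, a < b →
          0 < pr p (fun ω => a ≤ c ω ∧ c ω < b) →
          0 < pr p (fun ω => b ≤ c ω) →
          cexp p acc (fun ω => a ≤ c ω ∧ c ω < b) ≤ cexp p acc (fun ω => b ≤ c ω))) := by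
  have hvinj : Function.Injective v := hv.injective
  have hw : ∀ j : Fin k, 0 < pr p (fun ω => c ω = v j) := hlevel
  have hNa : ∀ j : Fin k,
      pr p (fun ω => c ω = v j) * cexp p acc (fun ω => c ω = v j)
        = ∑ ω, if c ω = v j then p ω * acc ω else 0 := by
    intro j
    have h0 : cexp p acc (fun ω => c ω = v j)
        = (∑ ω, if c ω = v j then p ω * acc ω else 0) / pr p (fun ω => c ω = v j) := rfl
    rw [h0, mul_comm, div_mul_cancel₀ _ (hw j).ne']
  have hcexpQ : ∀ Q : ℝ → Prop, cexp p acc (fun ω => Q (c ω))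
      = (∑ j ∈ Finset.univ.filter (fun j => Q (v j)),
            pr p (fun ω => c ω = v j) * cexp p acc (fun ω => c ω = v j))
        / (∑ j ∈ Finset.univ.filter (fun j => Q (v j)), pr p (fun ω => c ω = v j)) := by
    intro Q
    have h1 : (∑ ω, if Q (c ω) then p ω * acc ω else 0)
        = ∑ j ∈ Finset.univ.filter (fun j => Q (v j)),
            pr p (fun ω => c ω = v j) * cexp p acc (fun ω => c ω = v j) := by
      rw [fiber_sum c v hvinj hrange (fun ω => p ω * acc ω) Q]
      exact Finset.sum_congr rfl fun j _ => (hNa j).symm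
    have h2 : pr p (fun ω => Q (c ω))
        = ∑ j ∈ Finset.univ.filter (fun j => Q (v j)), pr p (fun ω => c ω = v j) :=
      fiber_sum c v hvinj hrange p Q
    show (∑ ω, if Q (c ω) then p ω * acc ω else 0) / pr p (fun ω => Q (c ω)) = _
    rw [h1, h2]
  have hpr_int : ∀ x y : ℝ, pr p (fun ω => x ≤ c ω ∧ c ω < y)
      = ∑ j ∈ Finset.univ.filter (fun j => x ≤ v j ∧ v j < y), pr p (fun ω => c ω = v j) :=
    by intro x y; convert fiber_sum c v hvinj hrange p (fun t => x ≤ t ∧ t < y) using 2 <;> convert rfl <;> rfl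
  have hpr_tail : ∀ y : ℝ, pr p (fun ω => y ≤ c ω)
      = ∑ j ∈ Finset.univ.filter (fun j => y ≤ v j), pr p (fun ω => c ω = v j) :=
    by intro y; convert fiber_sum c v hvinj hrange p (fun t => y ≤ t) using 2 <;> rfl
  have hcexp_int : ∀ x y : ℝ, cexp p acc (fun ω => x ≤ c ω ∧ c ω < y)
      = (∑ j ∈ Finset.univ.filter (fun j => x ≤ v j ∧ v j < y),
            pr p (fun ω => c ω = v j) * cexp p acc (fun ω => c ω = v j))
        / (∑ j ∈ Finset.univ.filter (fun j => x ≤ v j ∧ v j < y),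
            pr p (fun ω => c ω = v j)) :=
    by intro x y; convert hcexpQ (fun t => x ≤ t ∧ t < y) using 3 <;> exact (Finset.filter_congr_decidable _ _ _).symm
  have hcexp_tail : ∀ y : ℝ, cexp p acc (fun ω => y ≤ c ω)
      = (∑ j ∈ Finset.univ.filter (fun j => y ≤ v j),
            pr p (fun ω => c ω = v j) * cexp p acc (fun ω => c ω = v j))
        / (∑ j ∈ Finset.univ.filter (fun j => y ≤ v j),
            pr p (fun ω => c ω = v j)) :=
    by intro y; convert hcexpQ (fun t => y ≤ t) using 3 <;> exact (Finset.filter_congr_decidable _ _ _).symm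
  -- backward direction
  have hback : (∀ i : Fin k, (i : ℕ) + 1 < k →
          cexp p acc (fun ω => c ω = v i)
            ≤ (∑ j ∈ Finset.univ.filter (fun j => i < j),
                  pr p (fun ω => c ω = v j) * cexp p acc (fun ω => c ω = v j))
              / (∑ j ∈ Finset.univ.filter (fun j => i < j), pr p (fun ω => c ω = v j))) →
      (∀ a b : ℝ, a < b →
        0 < pr p (fun ω => a ≤ c ω ∧ c ω < b) →
        0 < pr p (fun ω => b ≤ c ω) →
        cexp p acc (fun ω => a ≤ c ω ∧ c ω < b) ≤ cexp p acc (fun ω => b ≤ c ω)) := by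
    intro hcond x y hxy hpos1 hpos2
    rw [hpr_int] at hpos1
    rw [hpr_tail] at hpos2
    rw [hcexp_int, hcexp_tail]
    have hFne : (Finset.univ.filter (fun j => x ≤ v j ∧ v j < y)).Nonempty := by
      by_contra h
      rw [Finset.not_nonempty_iff_eq_empty] at h
      rw [h, Finset.sum_empty] at hpos1
      exact lt_irrefl 0 hpos1
    have hGne : (Finset.univ.filter (fun j => y ≤ v j)).Nonempty := by
      by_contra h
      rw [Finset.not_nonempty_iff_eq_empty] at h
      rw [h, Finset.sum_empty] at hpos2
      exact lt_irrefl 0 hpos2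
    obtain ⟨m, hm⟩ := hGne
    set i := (Finset.univ.filter (fun j => x ≤ v j ∧ v j < y)).max' hFne with hidef
    have hiprop : x ≤ v i ∧ v i < y := by
      have h := Finset.max'_mem (Finset.univ.filter (fun j => x ≤ v j ∧ v j < y)) hFne
      rw [Finset.mem_filter] at h
      exact h.2
    have hG : Finset.univ.filter (fun j => y ≤ v j)
        = Finset.univ.filter (fun j => i < j) := by
      ext j
      simp only [Finset.mem_filter, Finset.mem_univ, true_and]
      constructor
      · intro hyj
        exact hv.lt_iff_lt.mp (lt_of_lt_of_le hiprop.2 hyj)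
      · intro hij
        by_contra hyj
        push_neg at hyj
        have hjF : j ∈ Finset.univ.filter (fun j => x ≤ v j ∧ v j < y) := by
          rw [Finset.mem_filter]
          exact ⟨Finset.mem_univ j, hiprop.1.trans (hv.monotone hij.le), hyj⟩
        have hle := Finset.le_max' _ j hjF
        exact absurd hij (not_lt.mpr hle)
    have him : i < m := by
      rw [hG, Finset.mem_filter] at hm
      exact hm.2
    have hik : (i : ℕ) + 1 < k := by
      have h1 := Fin.lt_def.mp him
      have h2 := m.isLt
      omega
    have hcond' : ∀ l : Fin k, (l : ℕ) + 1 < k →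
        cexp p acc (fun ω => c ω = v l)
          ≤ tailT (fun j => pr p (fun ω => c ω = v j))
              (fun j => cexp p acc (fun ω => c ω = v j)) l :=
      fun l hl => hcond l hl
    have hchain := chain (fun j => pr p (fun ω => c ω = v j))
      (fun j => cexp p acc (fun ω => c ω = v j)) hw hcond' i hik
    rw [hG]
    exact sum_div_le (fun j => pr p (fun ω => c ω = v j))
      (fun j => cexp p acc (fun ω => c ω = v j)) hw _ hFne
      (fun j hj => hchain j (Finset.le_max' _ j hj))
  -- forward direction
  have hfwd : (∀ a b : ℝ, a < b →
        0 < pr p (fun ω => a ≤ c ω ∧ c ω < b) →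
        0 < pr p (fun ω => b ≤ c ω) →
        cexp p acc (fun ω => a ≤ c ω ∧ c ω < b) ≤ cexp p acc (fun ω => b ≤ c ω)) →
      (∀ i : Fin k, (i : ℕ) + 1 < k →
          cexp p acc (fun ω => c ω = v i)
            ≤ (∑ j ∈ Finset.univ.filter (fun j => i < j),
                  pr p (fun ω => c ω = v j) * cexp p acc (fun ω => c ω = v j))
              / (∑ j ∈ Finset.univ.filter (fun j => i < j), pr p (fun ω => c ω = v j))) := by
    intro hC2 i hik
    set i' : Fin k := ⟨(i : ℕ) + 1, hik⟩ with hi'def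
    have hi'v : (i' : ℕ) = (i : ℕ) + 1 := rfl
    have hii' : i < i' := by rw [Fin.lt_def, hi'v]; omega
    have hvlt : v i < v i' := hv hii'
    have hFint : Finset.univ.filter (fun j => v i ≤ v j ∧ v j < v i') = {i} := by
      ext j
      simp only [Finset.mem_filter, Finset.mem_univ, true_and, Finset.mem_singleton,
        hv.le_iff_le, hv.lt_iff_lt, Fin.le_def, Fin.lt_def, Fin.ext_iff, hi'v]
      omega
    have hGtail : Finset.univ.filter (fun j => v i' ≤ v j)
        = Finset.univ.filter (fun j => i < j) := by
      ext j
      simp only [Finset.mem_filter, Finset.mem_univ, true_and, hv.le_iff_le,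
        Fin.le_def, Fin.lt_def, hi'v]
      omega
    have hpos1 : 0 < pr p (fun ω => v i ≤ c ω ∧ c ω < v i') := by
      rw [hpr_int, hFint, Finset.sum_singleton]
      exact hw i
    have hpos2 : 0 < pr p (fun ω => v i' ≤ c ω) := by
      rw [hpr_tail, hGtail]
      exact Finset.sum_pos (fun l _ => hw l) (tail_nonempty i hik)
    have h := hC2 (v i) (v i') hvlt hpos1 hpos2
    rw [hcexp_int, hcexp_tail, hFint, hGtail, Finset.sum_singleton, Finset.sum_singleton,
      mul_div_cancel_left₀ _ (hw i).ne'] at h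
    exact h
  have hmono_imp : (∀ i j : Fin k, i ≤ j →
          cexp p acc (fun ω => c ω = v i) ≤ cexp p acc (fun ω => c ω = v j)) →
      (∀ i : Fin k, (i : ℕ) + 1 < k →
          cexp p acc (fun ω => c ω = v i)
            ≤ (∑ j ∈ Finset.univ.filter (fun j => i < j),
                  pr p (fun ω => c ω = v j) * cexp p acc (fun ω => c ω = v j))
              / (∑ j ∈ Finset.univ.filter (fun j => i < j), pr p (fun ω => c ω = v j))) := by
    intro hm i hik
    have hS : 0 < ∑ j ∈ Finset.univ.filter (fun j => i < j), pr p (fun ω => c ω = v j) :=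
      Finset.sum_pos (fun l _ => hw l) (tail_nonempty i hik)
    rw [le_div_iff₀ hS]
    calc cexp p acc (fun ω => c ω = v i)
          * ∑ j ∈ Finset.univ.filter (fun j => i < j), pr p (fun ω => c ω = v j)
        = ∑ j ∈ Finset.univ.filter (fun j => i < j),
            cexp p acc (fun ω => c ω = v i) * pr p (fun ω => c ω = v j) := by
          rw [Finset.mul_sum]
      _ ≤ ∑ j ∈ Finset.univ.filter (fun j => i < j),
            pr p (fun ω => c ω = v j) * cexp p acc (fun ω => c ω = v j) := by
          refine Finset.sum_le_sum fun j hj => ?_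
          rw [mul_comm]
          have hij : i < j := (Finset.mem_filter.mp hj).2
          exact mul_le_mul_of_nonneg_left (hm i j hij.le) (hw j).le
  exact ⟨⟨hfwd, hback⟩, fun hm => hback (hmono_imp hm)⟩
end

section
/- Let (Ω, P) be a probability space, acc : Ω → {0,1}, c : Ω → [0,1], and suppose C2 holds. Then for any thresholds t₁ < t₂ with P(c ≥ t₂) > 0, the accuracy gain from tightening the gate satisfies SA(t₂) − SA(t₁) = (1 − φ(t₂)/φ(t₁)) · (SA(t₂) − E[acc | t₁ ≤ c < t₂]) ≥ 0 whenever P(t₁ ≤ c < t₂) > 0, and the gain is zero if and only if E[acc | t₁ ≤ c < t₂] = SA(t₂). -/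
open MeasureTheory

/-- Coverage: probability of confidence at least `t`. -/
noncomputable def phi {Ω : Type*} [MeasurableSpace Ω] (P : Measure Ω) (c : Ω → ℝ) (t : ℝ) : ℝ :=
  (P {ω | t ≤ c ω}).toReal

/-- Quantitative Confidence Gate Theorem: under C2, the selective accuracy gain from
tightening the gate equals the dropped mass fraction times the accuracy gap between the
retained tail and the dropped band; it is nonnegative, and zero iff the dropped band is
as accurate as the tail. -/
theorem confidence_gate_quantitative
    {Ω : Type*} [MeasurableSpace Ω] (P : Measure Ω) [IsProbabilityMeasure P]
    (acc c : Ω → ℝ) (hma : Measurable acc) (hmc : Measurable c)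
    (hacc : ∀ ω, acc ω = 0 ∨ acc ω = 1) (hc : ∀ ω, c ω ∈ Set.Icc (0 : ℝ) 1)
    (hC2 : ∀ a b : ℝ, a < b →
      0 < P {ω | a ≤ c ω ∧ c ω < b} → 0 < P {ω | b ≤ c ω} →
      ⨍ ω in {ω | a ≤ c ω ∧ c ω < b}, acc ω ∂P ≤ ⨍ ω in {ω | b ≤ c ω}, acc ω ∂P)
    (t₁ t₂ : ℝ) (ht : t₁ < t₂) (hφ₂ : 0 < P {ω | t₂ ≤ c ω})
    (hband : 0 < P {ω | t₁ ≤ c ω ∧ c ω < t₂}) :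
    (SA P acc c t₂ - SA P acc c t₁
        = (1 - phi P c t₂ / phi P c t₁)
            * (SA P acc c t₂ - ⨍ ω in {ω | t₁ ≤ c ω ∧ c ω < t₂}, acc ω ∂P))
      ∧ 0 ≤ SA P acc c t₂ - SA P acc c t₁
      ∧ (SA P acc c t₂ - SA P acc c t₁ = 0
          ↔ (⨍ ω in {ω | t₁ ≤ c ω ∧ c ω < t₂}, acc ω ∂P) = SA P acc c t₂) := by
  classical
  set D : Set Ω := {ω | t₁ ≤ c ω ∧ c ω < t₂} with hDdef
  set B : Set Ω := {ω | t₂ ≤ c ω} with hBdef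
  have hmB : MeasurableSet B := measurableSet_le measurable_const hmc
  have hmD : MeasurableSet D :=
    (measurableSet_le measurable_const hmc).inter (measurableSet_lt hmc measurable_const)
  have hA : {ω | t₁ ≤ c ω} = D ∪ B := by
    ext ω
    simp only [Set.mem_setOf_eq, Set.mem_union, hDdef, hBdef]
    constructor
    · intro h
      by_cases h2 : c ω < t₂
      · exact Or.inl ⟨h, h2⟩
      · exact Or.inr (not_lt.mp h2)
    · rintro (⟨h, _⟩ | h)
      · exact h
      · exact le_trans ht.le h
  have hdisj : Disjoint D B := by
    rw [Set.disjoint_left]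
    rintro ω ⟨_, h2⟩ h3
    exact absurd h3 (not_le.mpr h2)
  have hint : Integrable acc P := by
    refine (integrable_const (1 : ℝ)).mono' hma.aestronglyMeasurable ?_
    filter_upwards with ω
    rcases hacc ω with h | h <;> simp [h]
  have hPD : P D ≠ ⊤ := measure_ne_top _ _
  have hPB : P B ≠ ⊤ := measure_ne_top _ _
  set a : ℝ := (P D).toReal with hadef
  set b : ℝ := (P B).toReal with hbdef
  have ha : 0 < a := ENNReal.toReal_pos hband.ne' hPD
  have hb : 0 < b := ENNReal.toReal_pos hφ₂.ne' hPB
  have hab : 0 < a + b := by linarith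
  have hPA : (P {ω | t₁ ≤ c ω}).toReal = a + b := by
    rw [hA, measure_union hdisj hmB, ENNReal.toReal_add hPD hPB]
  have hIA : ∫ ω in {ω | t₁ ≤ c ω}, acc ω ∂P
      = (∫ ω in D, acc ω ∂P) + ∫ ω in B, acc ω ∂P := by
    rw [hA, setIntegral_union hdisj hmB hint.integrableOn hint.integrableOn]
  set ID : ℝ := ∫ ω in D, acc ω ∂P with hIDdef
  set IB : ℝ := ∫ ω in B, acc ω ∂P with hIBdef
  have hSA2 : SA P acc c t₂ = IB / b := by
    rw [SA, setAverage_eq, measureReal_def, hIBdef, ← hbdef, smul_eq_mul]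
    ring
  have hSA1 : SA P acc c t₁ = (ID + IB) / (a + b) := by
    rw [SA, setAverage_eq, measureReal_def, hIA, hPA, smul_eq_mul]
    ring
  have hAvgD : (⨍ ω in D, acc ω ∂P) = ID / a := by
    rw [setAverage_eq, measureReal_def, hIDdef, ← hadef, smul_eq_mul]
    ring
  have hphi1 : phi P c t₁ = a + b := hPA
  have hphi2 : phi P c t₂ = b := rfl
  have hgap : (⨍ ω in D, acc ω ∂P) ≤ SA P acc c t₂ := hC2 t₁ t₂ ht hband hφ₂
  have heq : SA P acc c t₂ - SA P acc c t₁
      = (1 - phi P c t₂ / phi P c t₁) * (SA P acc c t₂ - ⨍ ω in D, acc ω ∂P) := by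
    rw [hSA2, hSA1, hAvgD, hphi1, hphi2]
    field_simp
    ring
  have hfac : 0 < 1 - phi P c t₂ / phi P c t₁ := by
    rw [hphi1, hphi2]
    rw [sub_pos, div_lt_one hab]
    linarith
  refine ⟨heq, ?_, ?_⟩
  · rw [heq]
    exact mul_nonneg hfac.le (by linarith)
  · rw [heq]
    constructor
    · intro h
      rcases mul_eq_zero.mp h with h1 | h1
      · exact absurd h1 hfac.ne'
      · linarith
    · intro h
      rw [h]
      ring
end

section
/- Let Ω be a finite set with probability mass p, and let c, acc : Ω → ℝ. Suppose c and acc are comonotone: (c(ω₁) − c(ω₂))·(acc(ω₁) − acc(ω₂)) ≥ 0 for all ω₁, ω₂. Then E[c · acc] ≥ E[c] · E[acc] (Chebyshev's sum/association inequality), and moreover condition C2 holds for the pair (c, acc) when acc takes values in [0,1]. -/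
open scoped Classical BigOperators

/-- Comonotone confidence and accuracy have nonnegative covariance (Chebyshev's
association inequality), and when `acc` takes values in `[0,1]` the pair satisfies the
no-inversion-zones condition C2. -/
theorem comonotone_association_and_c2 {Ω : Type*} [Fintype Ω] (p acc c : Ω → ℝ)
    (hp : ∀ ω, 0 ≤ p ω) (hsum : ∑ ω, p ω = 1)
    (hcomono : ∀ ω₁ ω₂, 0 ≤ (c ω₁ - c ω₂) * (acc ω₁ - acc ω₂))
    (hacc : ∀ ω, acc ω ∈ Set.Icc (0 : ℝ) 1) :
    ((∑ ω, p ω * c ω) * (∑ ω, p ω * acc ω) ≤ ∑ ω, p ω * (c ω * acc ω))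
      ∧ (∀ a b : ℝ, a < b →
          0 < pr p (fun ω => a ≤ c ω ∧ c ω < b) →
          0 < pr p (fun ω => b ≤ c ω) →
          cexp p acc (fun ω => a ≤ c ω ∧ c ω < b) ≤ cexp p acc (fun ω => b ≤ c ω)) := by
  constructor
  · -- Chebyshev association inequality
    have key : 0 ≤ ∑ ω₁, ∑ ω₂, p ω₁ * p ω₂ * ((c ω₁ - c ω₂) * (acc ω₁ - acc ω₂)) := by
      refine Finset.sum_nonneg fun ω₁ _ => Finset.sum_nonneg fun ω₂ _ => ?_
      exact mul_nonneg (mul_nonneg (hp _) (hp _)) (hcomono _ _)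
    set K : ℝ := ∑ ω, p ω * (c ω * acc ω) with hK
    set C : ℝ := ∑ ω, p ω * c ω with hC
    set A : ℝ := ∑ ω, p ω * acc ω with hA
    have expand : ∑ ω₁, ∑ ω₂, p ω₁ * p ω₂ * ((c ω₁ - c ω₂) * (acc ω₁ - acc ω₂))
        = 2 * (K - C * A) := by
      have h1 : ∀ ω₁ : Ω, ∑ ω₂, p ω₁ * p ω₂ * ((c ω₁ - c ω₂) * (acc ω₁ - acc ω₂))
          = p ω₁ * (c ω₁ * acc ω₁) * (∑ ω, p ω)
            - p ω₁ * c ω₁ * A - p ω₁ * acc ω₁ * C + p ω₁ * K := by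
        intro ω₁
        rw [hA, hC, hK, Finset.mul_sum, Finset.mul_sum, Finset.mul_sum, Finset.mul_sum,
          ← Finset.sum_sub_distrib, ← Finset.sum_sub_distrib, ← Finset.sum_add_distrib]
        exact Finset.sum_congr rfl fun ω₂ _ => by ring
      rw [Finset.sum_congr rfl fun ω₁ _ => h1 ω₁]
      simp only [hsum, mul_one]
      rw [Finset.sum_add_distrib, Finset.sum_sub_distrib, Finset.sum_sub_distrib]
      have e1 : ∑ ω, p ω * (c ω * acc ω) = K := rfl
      have e2 : ∑ ω, p ω * c ω * A = C * A := by rw [← Finset.sum_mul]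
      have e3 : ∑ ω, p ω * acc ω * C = A * C := by rw [← Finset.sum_mul]
      have e4 : ∑ ω, p ω * K = K := by rw [← Finset.sum_mul, hsum, one_mul]
      rw [e1, e2, e3, e4]
      ring
    rw [expand] at key
    linarith
  · intro a b hab hS hT
    have hmono : ∀ ω ω', (a ≤ c ω ∧ c ω < b) → b ≤ c ω' → acc ω ≤ acc ω' := by
      intro ω ω' hω hω'
      have hc : c ω < c ω' := lt_of_lt_of_le hω.2 hω'
      have := hcomono ω' ω
      nlinarith
    unfold cexp
    rw [div_le_div_iff₀ hS hT]
    unfold pr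
    rw [Finset.sum_mul_sum, Finset.sum_mul_sum]
    conv_rhs => rw [Finset.sum_comm]
    refine Finset.sum_le_sum fun ω _ => Finset.sum_le_sum fun ω' _ => ?_
    by_cases hω : a ≤ c ω ∧ c ω < b <;> by_cases hω' : b ≤ c ω' <;> simp [hω, hω']
    have h1 := hmono ω ω' hω hω'
    nlinarith [mul_le_mul_of_nonneg_left h1 (mul_nonneg (hp ω) (hp ω'))]
end

section
/- Let Y = f + g + ε as above with f, g, ε independent, E[g] = E[ε] = 0, and let the confidence function c be a measurable function of a 'data density' variable N that is independent of g and ε. Suppose the structural error f − f̂ is a function of N with |f(N) − f̂(N)| non-increasing in N, and c is non-decreasing in N. Then the conditional expected squared structural error E[(f − f̂)² | c ≥ t] is non-increasing in t, while the conditional contextual error E[g² | c ≥ t] = Var(g) is constant in t. -/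
open MeasureTheory ProbabilityTheory

/-- Structural gating: if confidence is a monotone function of a data-density variable
`N` independent of the contextual term `g`, and the (absolute) structural error is
non-increasing in `N`, then conditioning on higher confidence monotonically reduces the
expected squared structural error while leaving the contextual error `E[g² | c ≥ t] =
Var(g)` constant. -/
theorem structural_gating
    {Ω : Type*} [MeasurableSpace Ω] (P : Measure Ω) [IsProbabilityMeasure P]
    (N g : Ω → ℝ) (errF h : ℝ → ℝ)
    (hmN : Measurable N) (hmg : Measurable g)
    (hmerr : Measurable errF) (hmh : Measurable h)
    (hhmono : Monotone h)
    (herr_anti : ∀ x y : ℝ, x ≤ y → |errF y| ≤ |errF x|)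
    (hindep : IndepFun g N P)
    (hEg : ∫ ω, g ω ∂P = 0) (hg2 : MemLp g 2 P)
    (herr2 : MemLp (fun ω => errF (N ω)) 2 P) :
    (∀ t₁ t₂ : ℝ, t₁ ≤ t₂ → 0 < P {ω | t₂ ≤ h (N ω)} →
        ⨍ ω in {ω | t₂ ≤ h (N ω)}, (errF (N ω)) ^ 2 ∂P
          ≤ ⨍ ω in {ω | t₁ ≤ h (N ω)}, (errF (N ω)) ^ 2 ∂P)
      ∧ (∀ t : ℝ, 0 < P {ω | t ≤ h (N ω)} →
          ⨍ ω in {ω | t ≤ h (N ω)}, (g ω) ^ 2 ∂P = variance g P) := by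
  -- notation
  set φ : ℝ → ℝ := fun x => (errF x) ^ 2 with hφdef
  have hφ_anti : ∀ x y : ℝ, x ≤ y → φ y ≤ φ x := by
    intro x y hxy
    have := herr_anti x y hxy
    calc φ y = |errF y| ^ 2 := by rw [sq_abs]
      _ ≤ |errF x| ^ 2 := by
          exact pow_le_pow_left₀ (abs_nonneg _) this 2
      _ = φ x := by rw [sq_abs]
  have hφ_nonneg : ∀ x, 0 ≤ φ x := fun x => sq_nonneg _
  have hSmeas : ∀ t : ℝ, MeasurableSet {x : ℝ | t ≤ h x} :=
    fun t => measurableSet_le measurable_const hmh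
  have hAmeas : ∀ t : ℝ, MeasurableSet {ω | t ≤ h (N ω)} :=
    fun t => hmN (hSmeas t)
  have hint : Integrable (fun ω => φ (N ω)) P := herr2.integrable_sq
  constructor
  · -- structural part
    intro t₁ t₂ ht h₂pos
    set S₁ : Set ℝ := {x | t₁ ≤ h x}
    set S₂ : Set ℝ := {x | t₂ ≤ h x}
    have hS21 : S₂ ⊆ S₁ := fun x hx => le_trans ht hx
    have hS₂upper : ∀ x ∈ S₂, ∀ y, x ≤ y → y ∈ S₂ :=
      fun x hx y hxy => le_trans hx (hhmono hxy)
    set A₁ : Set Ω := {ω | t₁ ≤ h (N ω)}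
    set A₂ : Set Ω := {ω | t₂ ≤ h (N ω)}
    have hA21 : A₂ ⊆ A₁ := fun ω hω => hS21 hω
    set B : Set Ω := A₁ \ A₂ with hBdef
    have hmB : MeasurableSet B := (hAmeas t₁).diff (hAmeas t₂)
    have hm2 : MeasurableSet A₂ := hAmeas t₂
    have hA1eq : A₁ = A₂ ∪ B := by
      rw [hBdef, Set.union_diff_cancel hA21]
    have hdisj : Disjoint A₂ B := Set.disjoint_sdiff_right
    have hPA1 : P A₁ = P A₂ + P B := by
      rw [hA1eq, measure_union hdisj.symm.symm hmB]
    have hI1 : ∫ ω in A₁, φ (N ω) ∂P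
        = (∫ ω in A₂, φ (N ω) ∂P) + ∫ ω in B, φ (N ω) ∂P := by
      rw [hA1eq, setIntegral_union hdisj hmB hint.integrableOn hint.integrableOn]
    by_cases hB0 : P B = 0
    · -- equal averages
      have : ∫ ω in B, φ (N ω) ∂P = 0 := by
        rw [Measure.restrict_eq_zero.2 hB0, integral_zero_measure]
      rw [setAverage_eq, setAverage_eq]
      have hPeq : P A₁ = P A₂ := by rw [hPA1, hB0, add_zero]
      rw [hI1, this, add_zero, measureReal_def, measureReal_def, hPeq]
    · -- main case
      have hBpos : 0 < P B := lt_of_le_of_ne zero_le (Ne.symm hB0)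
      obtain ⟨ω₀, hω₀⟩ : B.Nonempty := by
        by_contra hemp
        rw [Set.not_nonempty_iff_eq_empty] at hemp
        rw [hemp, measure_empty] at hBpos; exact lt_irrefl _ hBpos
      have hSne : (S₁ \ S₂).Nonempty := ⟨N ω₀, hω₀.1, hω₀.2⟩
      set c : ℝ := sInf (φ '' (S₁ \ S₂)) with hcdef
      have hbdd : BddBelow (φ '' (S₁ \ S₂)) :=
        ⟨0, fun b ⟨y, _, hy⟩ => hy ▸ hφ_nonneg y⟩
      have hcle : ∀ y ∈ S₁ \ S₂, c ≤ φ y := fun y hy =>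
        csInf_le hbdd ⟨y, hy, rfl⟩
      have hlec : ∀ x ∈ S₂, φ x ≤ c := by
        intro x hx
        refine le_csInf (hSne.image φ) ?_
        rintro b ⟨y, hy, rfl⟩
        have hyx : y ≤ x := by
          by_contra hcon
          exact hy.2 (hS₂upper x hx y (le_of_not_ge hcon))
        exact hφ_anti y x hyx
      -- integral bounds
      have hI2 : ∫ ω in A₂, φ (N ω) ∂P ≤ c * (P A₂).toReal := by
        calc ∫ ω in A₂, φ (N ω) ∂P ≤ ∫ _ω in A₂, c ∂P := by
              refine setIntegral_mono_on hint.integrableOn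
                (integrableOn_const (measure_ne_top _ _)) hm2 ?_
              intro ω hω; exact hlec (N ω) hω
          _ = c * (P A₂).toReal := by
              rw [setIntegral_const, smul_eq_mul, mul_comm, measureReal_def]
      have hIB : c * (P B).toReal ≤ ∫ ω in B, φ (N ω) ∂P := by
        calc c * (P B).toReal = ∫ _ω in B, c ∂P := by
              rw [setIntegral_const, smul_eq_mul, mul_comm, measureReal_def]
          _ ≤ ∫ ω in B, φ (N ω) ∂P := by
              refine setIntegral_mono_on
                (integrableOn_const (measure_ne_top _ _)) hint.integrableOn hmB ?_
              intro ω hω; exact hcle (N ω) ⟨hω.1, hω.2⟩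
      set m₂ : ℝ := (P A₂).toReal with hm₂def
      set mB : ℝ := (P B).toReal with hmBdef
      have hm₂pos : 0 < m₂ := ENNReal.toReal_pos h₂pos.ne' (measure_ne_top _ _)
      have hmBnn : 0 ≤ mB := ENNReal.toReal_nonneg
      have hm₁ : (P A₁).toReal = m₂ + mB := by
        rw [hPA1, ENNReal.toReal_add (measure_ne_top _ _) (measure_ne_top _ _)]
      set I₂ : ℝ := ∫ ω in A₂, φ (N ω) ∂P with hI₂def
      set IB : ℝ := ∫ ω in B, φ (N ω) ∂P with hIBdef
      rw [setAverage_eq, setAverage_eq, measureReal_def, measureReal_def, hI1, hm₁]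
      show m₂⁻¹ • I₂ ≤ (m₂ + mB)⁻¹ • (I₂ + IB)
      rw [smul_eq_mul, smul_eq_mul, inv_mul_eq_div, inv_mul_eq_div,
        div_le_div_iff₀ hm₂pos (by linarith)]
      -- need I₂ * (m₂ + mB) ≤ (I₂ + IB) * m₂, i.e. I₂ * mB ≤ IB * m₂
      have key : I₂ * mB ≤ IB * m₂ := by
        calc I₂ * mB ≤ (c * m₂) * mB := by
              exact mul_le_mul_of_nonneg_right hI2 hmBnn
          _ = (c * mB) * m₂ := by ring
          _ ≤ IB * m₂ := mul_le_mul_of_nonneg_right hIB hm₂pos.le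
      nlinarith [key]
  · -- contextual part
    intro t hpos
    set S : Set ℝ := {x | t ≤ h x}
    set A : Set Ω := {ω | t ≤ h (N ω)}
    have hmA : MeasurableSet A := hAmeas t
    have hindep2 : IndepFun (fun ω => (g ω) ^ 2)
        (fun ω => Set.indicator S (fun _ => (1 : ℝ)) (N ω)) P :=
      hindep.comp (measurable_id.pow_const 2)
        ((measurable_const.indicator (hSmeas t)))
    have hintg2 : Integrable (fun ω => (g ω) ^ 2) P := hg2.integrable_sq
    have hintind : Integrable (fun ω => Set.indicator S (fun _ => (1 : ℝ)) (N ω)) P := by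
      refine Integrable.mono' (integrable_const 1) ?_ ?_
      · exact ((measurable_const.indicator (hSmeas t)).comp hmN).aestronglyMeasurable
      · refine Filter.Eventually.of_forall fun ω => ?_
        by_cases hω : N ω ∈ S <;> simp [Set.indicator, hω]
    have hmul := hindep2.integral_mul_eq_mul_integral hintg2.aestronglyMeasurable hintind.aestronglyMeasurable
    have hind_int : ∫ ω, Set.indicator S (fun _ => (1 : ℝ)) (N ω) ∂P = (P A).toReal := by
      have : (fun ω => Set.indicator S (fun _ => (1 : ℝ)) (N ω))
          = Set.indicator A (fun _ => (1 : ℝ)) := by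
        funext ω
        by_cases hω : N ω ∈ S
        · simp [Set.indicator, hω, show ω ∈ A from hω]
        · simp [Set.indicator, hω, show ω ∉ A from hω]
      rw [this, integral_indicator hmA, setIntegral_const, smul_eq_mul, mul_one, measureReal_def]
    have hsetint : ∫ ω in A, (g ω) ^ 2 ∂P = (∫ ω, (g ω) ^ 2 ∂P) * (P A).toReal := by
      have heq : Set.indicator A (fun ω => (g ω) ^ 2)
          = fun ω => (g ω) ^ 2 * Set.indicator S (fun _ => (1 : ℝ)) (N ω) := by
        funext ω
        by_cases hω : N ω ∈ S
        · simp [Set.indicator, hω, show ω ∈ A from hω]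
        · simp [Set.indicator, hω, show ω ∉ A from hω]
      rw [← integral_indicator hmA, heq, ← hind_int]
      exact hmul
    have hPApos : 0 < (P A).toReal := ENNReal.toReal_pos hpos.ne' (measure_ne_top _ _)
    rw [setAverage_eq, measureReal_def, hsetint, smul_eq_mul]
    rw [variance_eq_sub hg2]
    have : ∫ ω, g ω ∂P = 0 := hEg
    simp only [Pi.pow_apply]
    rw [show (∫ ω, g ω ∂P) = 0 from hEg]
    ring_nf
    rw [mul_inv_cancel₀ hPApos.ne', one_mul]
end

section
/- Let Ω be a finite probability space, acc : Ω → {0,1}, and let c₁, c₂ : Ω → [0,1] be two confidence functions that induce the same ordering of Ω (c₁(ω) > c₁(ω') iff c₂(ω) > c₂(ω')). Then C2 holds for c₁ if and only if C2 holds for c₂, and the set of achievable (coverage, selective accuracy) pairs {(φ(t), SA(t)) : t ∈ [0,1], φ(t) > 0} is the same for both confidence functions. -/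
open scoped Classical BigOperators

/-- The no-inversion-zones condition C2 for a confidence function `c`. -/
def C2 {Ω : Type*} [Fintype Ω] (p acc c : Ω → ℝ) : Prop :=
  ∀ a b : ℝ, a < b →
    0 < pr p (fun ω => a ≤ c ω ∧ c ω < b) →
    0 < pr p (fun ω => b ≤ c ω) →
    cexp p acc (fun ω => a ≤ c ω ∧ c ω < b) ≤ cexp p acc (fun ω => b ≤ c ω)

/-- The achievable (coverage, selective accuracy) pairs of a confidence function. -/
def curve {Ω : Type*} [Fintype Ω] (p acc c : Ω → ℝ) : Set (ℝ × ℝ) :=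
  {q | ∃ t ∈ Set.Icc (0 : ℝ) 1, 0 < pr p (fun ω => t ≤ c ω) ∧
    q = (pr p (fun ω => t ≤ c ω), cexp p acc (fun ω => t ≤ c ω))}

lemma pr_congr {Ω : Type*} [Fintype Ω] (p : Ω → ℝ) {S T : Ω → Prop}
    (h : ∀ ω, S ω ↔ T ω) : pr p S = pr p T := by
  unfold pr
  exact Finset.sum_congr rfl fun ω _ => by simp [h ω]

lemma cexp_congr {Ω : Type*} [Fintype Ω] (p acc : Ω → ℝ) {S T : Ω → Prop}
    (h : ∀ ω, S ω ↔ T ω) : cexp p acc S = cexp p acc T := by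
  unfold cexp
  rw [pr_congr p h]
  congr 1
  exact Finset.sum_congr rfl fun ω _ => by simp [h ω]

lemma pr_pos_iff {Ω : Type*} [Fintype Ω] {p : Ω → ℝ} (hp : ∀ ω, 0 < p ω)
    (S : Ω → Prop) : 0 < pr p S ↔ ∃ ω, S ω := by
  constructor
  · intro h
    by_contra hne
    push_neg at hne
    have : pr p S = 0 := by
      unfold pr
      exact Finset.sum_eq_zero fun ω _ => by simp [hne ω]
    simp [this] at h
  · rintro ⟨ω₀, h₀⟩
    have h1 : p ω₀ ≤ pr p S := by
      unfold pr
      have := Finset.single_le_sum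
        (f := fun ω => if S ω then p ω else 0)
        (fun ω _ => by by_cases hS : S ω <;> simp [hS, (hp ω).le])
        (Finset.mem_univ ω₀)
      simpa [h₀] using this
    exact lt_of_lt_of_le (hp ω₀) h1

lemma exists_min_on {Ω : Type*} [Fintype Ω] (c : Ω → ℝ) (S : Ω → Prop)
    (h : ∃ ω, S ω) : ∃ m, S m ∧ ∀ ω, S ω → c m ≤ c ω := by
  obtain ⟨ω₀, h₀⟩ := h
  obtain ⟨m, hm, hmin⟩ := Finset.exists_min_image (Finset.univ.filter S) c
    ⟨ω₀, by simp [h₀]⟩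
  refine ⟨m, by simpa using hm, fun ω hω => hmin ω (by simp [hω])⟩

lemma key {Ω : Type*} [Fintype Ω] (p acc c₁ c₂ : Ω → ℝ)
    (hp : ∀ ω, 0 < p ω)
    (hc₂ : ∀ ω, c₂ ω ∈ Set.Icc (0 : ℝ) 1)
    (horder : ∀ ω ω', c₁ ω' < c₁ ω ↔ c₂ ω' < c₂ ω) :
    (C2 p acc c₂ → C2 p acc c₁) ∧ curve p acc c₁ ⊆ curve p acc c₂ := by
  have hle : ∀ m ω, c₁ m ≤ c₁ ω ↔ c₂ m ≤ c₂ ω := by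
    intro m ω
    rw [← not_lt, ← not_lt, not_iff_not]
    exact horder m ω
  constructor
  · intro h2 a b hab hA hB
    obtain ⟨mB, hmB, hminB⟩ := exists_min_on c₁ (fun ω => b ≤ c₁ ω)
      ((pr_pos_iff hp _).1 hB)
    have hBiff : ∀ ω, (b ≤ c₁ ω) ↔ (c₂ mB ≤ c₂ ω) := by
      intro ω
      rw [← hle]
      exact ⟨fun h => hminB ω h, fun h => le_trans hmB h⟩
    obtain ⟨ωA, hωA⟩ := (pr_pos_iff hp _).1 hA
    obtain ⟨m', hm', hmin'⟩ := exists_min_on c₁ (fun ω => a ≤ c₁ ω) ⟨ωA, hωA.1⟩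
    have hUiff : ∀ ω, (a ≤ c₁ ω) ↔ (c₂ m' ≤ c₂ ω) := by
      intro ω
      rw [← hle]
      exact ⟨fun h => hmin' ω h, fun h => le_trans hm' h⟩
    have hAiff : ∀ ω, (a ≤ c₁ ω ∧ c₁ ω < b) ↔ (c₂ m' ≤ c₂ ω ∧ c₂ ω < c₂ mB) := by
      intro ω
      rw [hUiff ω, ← not_le, ← not_le (a := c₂ mB), not_iff_not.2 (hBiff ω)]
    have hlt : c₂ m' < c₂ mB := by
      rw [← horder]
      calc c₁ m' ≤ c₁ ωA := hmin' ωA hωA.1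
        _ < b := hωA.2
        _ ≤ c₁ mB := hmB
    have := h2 (c₂ m') (c₂ mB) hlt
      (by rwa [← pr_congr p hAiff]) (by rwa [← pr_congr p hBiff])
    rwa [← cexp_congr p acc hAiff, ← cexp_congr p acc hBiff] at this
  · rintro q ⟨t, ht, hpos, hq⟩
    obtain ⟨m, hm, hmin⟩ := exists_min_on c₁ (fun ω => t ≤ c₁ ω)
      ((pr_pos_iff hp _).1 hpos)
    have hiff : ∀ ω, (t ≤ c₁ ω) ↔ (c₂ m ≤ c₂ ω) := by
      intro ω
      rw [← hle]
      exact ⟨fun h => hmin ω h, fun h => le_trans hm h⟩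
    exact ⟨c₂ m, hc₂ m, by rwa [← pr_congr p hiff],
      by rw [hq, pr_congr p hiff, cexp_congr p acc hiff]⟩

/-- Invariance under monotone reparametrization: two confidence functions inducing the
same ordering have C2 simultaneously and realize the same coverage–selective-accuracy
trade-off. -/
theorem rank_invariance {Ω : Type*} [Fintype Ω] (p acc c₁ c₂ : Ω → ℝ)
    (hp : ∀ ω, 0 < p ω) (hsum : ∑ ω, p ω = 1)
    (hacc : ∀ ω, acc ω = 0 ∨ acc ω = 1)
    (hc₁ : ∀ ω, c₁ ω ∈ Set.Icc (0 : ℝ) 1) (hc₂ : ∀ ω, c₂ ω ∈ Set.Icc (0 : ℝ) 1)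
    (horder : ∀ ω ω', c₁ ω' < c₁ ω ↔ c₂ ω' < c₂ ω) :
    (C2 p acc c₁ ↔ C2 p acc c₂) ∧ curve p acc c₁ = curve p acc c₂ := by
  have h12 := key p acc c₁ c₂ hp hc₂ horder
  have h21 := key p acc c₂ c₁ hp hc₁ (fun ω ω' => (horder ω ω').symm)
  exact ⟨⟨h21.1, h12.1⟩, Set.Subset.antisymm h12.2 h21.2⟩
end
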